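/- Let P : ℝ³ → ℝ be a harmonic homogeneous polynomial of degree n ≥ 0, let a ∈ ℝ be any constant, and define the vector field 𝒩(x) = a P(x) x + (1 − a/(2n+1) − |x|²) ∇P(x). Then ∇ × (∇ × 𝒩)(x) = (n+1)(a+2) ∇P(x) for all x ∈ ℝ³. -/

import Mathlib

open MeasureTheory Real
open scoped RealInnerProductSpace

noncomputable section

/-- Three-dimensional Euclidean space. -/
abbrev E3 : Type := EuclideanSpace ℝ (Fin 3)

/-- Build an element of `E3` from coordinates. -/
def toE3 (v : Fin 3 → ℝ) : E3 := (WithLp.equiv 2 (Fin 3 → ℝ)).symm v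

/-- Partial derivative in the `i`-th coordinate direction. -/
def pd (f : E3 → ℝ) (i : Fin 3) (x : E3) : ℝ :=
  fderiv ℝ f x (EuclideanSpace.single i 1)

/-- The gradient, as the vector of partial derivatives. -/
def grad3 (f : E3 → ℝ) (x : E3) : E3 := toE3 fun i => pd f i x

/-- The Laplacian: the sum of the second partial derivatives. -/
def lap3 (f : E3 → ℝ) (x : E3) : ℝ := ∑ i, pd (pd f i) i x

/-- Divergence of a vector field. -/
def div3 (u : E3 → E3) (x : E3) : ℝ := ∑ i, pd (fun y => u y i) i x

/-- Componentwise Laplacian of a vector field. -/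
def vlap3 (u : E3 → E3) (x : E3) : E3 := toE3 fun i => lap3 (fun y => u y i) x

/-- Cross product in `ℝ³`. -/
def cross3 (u v : E3) : E3 :=
  toE3 ![u 1 * v 2 - u 2 * v 1, u 2 * v 0 - u 0 * v 2, u 0 * v 1 - u 1 * v 0]

/-- The function `ℝ³ → ℝ` determined by a polynomial in three variables. -/
def polyFun (P : MvPolynomial (Fin 3) ℝ) : E3 → ℝ :=
  fun x => MvPolynomial.eval (fun i => x i) P

/-- The curl of a vector field in `ℝ³`. -/
def curl3 (u : E3 → E3) (x : E3) : E3 :=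
  toE3 ![pd (fun y => u y 2) 1 x - pd (fun y => u y 1) 2 x,
         pd (fun y => u y 0) 2 x - pd (fun y => u y 2) 0 x,
         pd (fun y => u y 1) 0 x - pd (fun y => u y 0) 1 x]

namespace CurlAux
open MvPolynomial

abbrev P3 := MvPolynomial (Fin 3) ℝ

@[simp] lemma polyFun_C (c : ℝ) (x : E3) : polyFun (C c) x = c := by simp [polyFun]
@[simp] lemma polyFun_zero (x : E3) : polyFun (0 : P3) x = 0 := by simp [polyFun]
@[simp] lemma polyFun_add (p q : P3) (x : E3) : polyFun (p+q) x = polyFun p x + polyFun q x := by simp [polyFun]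
@[simp] lemma polyFun_sub (p q : P3) (x : E3) : polyFun (p-q) x = polyFun p x - polyFun q x := by simp [polyFun]
@[simp] lemma polyFun_mul (p q : P3) (x : E3) : polyFun (p*q) x = polyFun p x * polyFun q x := by simp [polyFun]
@[simp] lemma polyFun_one (x : E3) : polyFun (1 : P3) x = 1 := by simp [polyFun]
@[simp] lemma polyFun_X (i : Fin 3) (x : E3) : polyFun (X i) x = x i := by simp [polyFun]

lemma hasFDerivAt_polyFun (P : P3) (x : E3) :
    HasFDerivAt (polyFun P)
      (∑ i, polyFun (pderiv i P) x • (EuclideanSpace.proj i : E3 →L[ℝ] ℝ)) x := by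
  induction P using MvPolynomial.induction_on with
  | C c =>
      have : (∑ i, polyFun (pderiv i (C c : P3)) x • (EuclideanSpace.proj i : E3 →L[ℝ] ℝ)) = 0 := by
        simp [pderiv_C]
      rw [this]
      have : polyFun (C c : P3) = fun _ : E3 => c := funext fun y => by simp
      rw [this]
      exact hasFDerivAt_const _ _
  | add p q hp hq =>
      have : polyFun (p + q) = fun y => polyFun p y + polyFun q y := funext fun y => by simp
      rw [this]
      have h := hp.add hq
      refine h.congr_fderiv (Eq.symm ?_)
      rw [← Finset.sum_add_distrib]
      exact Finset.sum_congr rfl fun i _ => by simp [add_smul]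
  | mul_X p i hp =>
      have : polyFun (p * X i) = fun y => polyFun p y * y i := funext fun y => by simp
      rw [this]
      have hX : HasFDerivAt (fun y : E3 => y i) (EuclideanSpace.proj i : E3 →L[ℝ] ℝ) x :=
        (EuclideanSpace.proj i : E3 →L[ℝ] ℝ).hasFDerivAt
      have h := hp.mul hX
      refine h.congr_fderiv (Eq.symm ?_)
      refine ContinuousLinearMap.ext fun v => ?_
      simp only [ContinuousLinearMap.sum_apply, ContinuousLinearMap.smul_apply,
        ContinuousLinearMap.add_apply, pderiv_mul, pderiv_X, polyFun_add, polyFun_mul,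
        polyFun_X, Pi.single_apply, apply_ite (fun q => polyFun q x), polyFun_C,
        polyFun_zero, polyFun_one, smul_eq_mul]
      rw [Finset.sum_congr rfl (fun j _ => by split <;> ring :
        ∀ j ∈ Finset.univ, (polyFun ((pderiv j) p) x * x i + polyFun p x * (if i = j then (1:ℝ) else 0)) * (EuclideanSpace.proj j) v
          = x i * (polyFun ((pderiv j) p) x * (EuclideanSpace.proj j) v) + (if i = j then polyFun p x * (EuclideanSpace.proj j) v else 0))]
      rw [Finset.sum_add_distrib, Finset.sum_ite_eq]
      simp [Finset.mul_sum]
      ring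

@[simp] lemma toE3_apply (v : Fin 3 → ℝ) (i : Fin 3) : toE3 v i = v i := rfl

lemma pd_polyFun (P : P3) (i : Fin 3) (x : E3) :
    pd (polyFun P) i x = polyFun (pderiv i P) x := by
  rw [pd, (hasFDerivAt_polyFun P x).fderiv]
  simp [EuclideanSpace.single_apply]

lemma pderiv_comm' (i j : Fin 3) (p : P3) :
    pderiv i (pderiv j p) = pderiv j (pderiv i p) := by
  induction p using MvPolynomial.induction_on with
  | C c => simp
  | add p q hp hq => simp [hp, hq]
  | mul_X p m hp =>
      simp only [pderiv_mul, pderiv_X, map_add, hp, Pi.single_apply,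
        apply_ite (pderiv i), apply_ite (pderiv j), pderiv_one, map_zero,
        mul_ite, mul_one, mul_zero]
      split_ifs <;> ring

lemma euler_term (v : Fin 3 →₀ ℕ) (c : ℝ) (i : Fin 3) :
    X i * pderiv i (monomial v c) = (v i : ℝ) • monomial v c := by
  rw [pderiv_monomial]
  by_cases h : v i = 0
  · simp [h]
  · have hv : Finsupp.single i 1 + (v - Finsupp.single i 1) = v := by
      ext j
      rcases eq_or_ne j i with rfl | hj
      · simp [Finsupp.single_apply]
        omega
      · simp [Finsupp.single_apply, hj, Ne.symm hj]
    calc X i * monomial (v - Finsupp.single i 1) (c * v i)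
        = X i ^ 1 * monomial (v - Finsupp.single i 1) (c * v i) := by rw [pow_one]
      _ = monomial (Finsupp.single i 1 + (v - Finsupp.single i 1)) (c * v i) :=
          (monomial_single_add).symm
      _ = (v i : ℝ) • monomial v c := by rw [hv, smul_monomial, smul_eq_mul, mul_comm]

lemma euler {n : ℕ} {P : P3} (hhom : P.IsHomogeneous n) :
    X 0 * pderiv 0 P + X 1 * pderiv 1 P + X 2 * pderiv 2 P = C (n : ℝ) * P := by
  have key : ∑ i : Fin 3, X i * pderiv i P = C (n : ℝ) * P := by
    conv_lhs => rw [P.as_sum]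
    conv_rhs => rw [P.as_sum]
    simp only [map_sum, Finset.mul_sum]
    rw [Finset.sum_comm]
    refine Finset.sum_congr rfl fun v hv => ?_
    simp only [euler_term]
    rw [← Finset.sum_smul]
    have hdeg : ∑ i : Fin 3, (v i : ℝ) = (n : ℝ) := by
      have h1 := hhom (mem_support_iff.mp hv)
      have h2 : (Finsupp.weight (1 : Fin 3 → ℕ)) v = ∑ i : Fin 3, v i := by
        rw [Finsupp.weight_apply, Finsupp.sum_fintype]
        · simp
        · intro; simp
      rw [h2] at h1
      rw [← h1]
      push_cast
      rfl
    rw [hdeg, C_mul']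
  simpa [Fin.sum_univ_three] using key

def r2 : P3 := X 0 * X 0 + X 1 * X 1 + X 2 * X 2

def NP (a c : ℝ) (P : P3) (i : Fin 3) : P3 := C a * P * X i + (C c - r2) * pderiv i P

lemma hr2 (m : Fin 3) : pderiv m r2 = 2 * X m := by
  fin_cases m <;>
    · simp [r2, pderiv_mul]
      ring

lemma two_eq_C : (2 : P3) = C (2:ℝ) := by
  rw [show (2:ℝ) = 1 + 1 by norm_num, map_add, map_one]; norm_num

lemma key (a c : ℝ) (n : ℕ) (P : P3) (i j k : Fin 3)
    (hij : i ≠ j) (hji : j ≠ i) (hik : i ≠ k) (hki : k ≠ i) (hjk : j ≠ k) (hkj : k ≠ j)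
    (hlap' : pderiv i (pderiv i P) + pderiv j (pderiv j P) + pderiv k (pderiv k P) = 0)
    (heuler' : X i * pderiv i P + X j * pderiv j P + X k * pderiv k P = C (n:ℝ) * P) :
    pderiv j (pderiv i (NP a c P j) - pderiv j (NP a c P i))
      - pderiv k (pderiv k (NP a c P i) - pderiv i (NP a c P k))
      = C (((n:ℝ)+1)*(a+2)) * pderiv i P := by
  have heulerD := congrArg (pderiv i) heuler'
  simp only [map_add, pderiv_mul, pderiv_X_self, pderiv_X_of_ne hji,
    pderiv_X_of_ne hki, pderiv_C_mul, pderiv_C, one_mul, zero_mul, zero_add] at heulerD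
  have hMk : pderiv i (NP a c P j) - pderiv j (NP a c P i)
      = (C a + 2) * (X j * pderiv i P - X i * pderiv j P) := by
    simp only [NP, map_add, map_sub, pderiv_mul, pderiv_C_mul, pderiv_C, hr2,
      pderiv_X_self, pderiv_X_of_ne hij, pderiv_X_of_ne hji, mul_one, mul_zero,
      zero_sub, zero_mul, add_zero, zero_add]
    linear_combination (C c - r2) * pderiv_comm' i j P
  have hMj : pderiv k (NP a c P i) - pderiv i (NP a c P k)
      = (C a + 2) * (X i * pderiv k P - X k * pderiv i P) := by
    simp only [NP, map_add, map_sub, pderiv_mul, pderiv_C_mul, pderiv_C, hr2,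
      pderiv_X_self, pderiv_X_of_ne hik, pderiv_X_of_ne hki, mul_one, mul_zero,
      zero_sub, zero_mul, add_zero, zero_add]
    linear_combination (C c - r2) * pderiv_comm' k i P
  rw [hMk, hMj]
  have hconst : ∀ (m : Fin 3), pderiv m ((C a + 2 : P3)) = 0 := by
    intro m; rw [two_eq_C, ← map_add]; exact pderiv_C
  simp only [pderiv_mul, hconst, zero_mul, zero_add, map_sub, pderiv_X_self,
    pderiv_X_of_ne hji, pderiv_X_of_ne hij, pderiv_X_of_ne hik, pderiv_X_of_ne hki,
    mul_one, zero_mul, one_mul]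
  have hC : (C (((n:ℝ)+1)*(a+2)) : P3) = (C (n:ℝ) + 1) * (C a + 2) := by
    rw [map_mul, map_add, map_add, map_one, two_eq_C]
  rw [hC]
  linear_combination (C a + 2) * heulerD - (C a + 2) * X i * hlap'
    + (C a + 2) * X j * pderiv_comm' j i P + (C a + 2) * X k * pderiv_comm' k i P


lemma pd_congr {f g : E3 → ℝ} (h : ∀ y, f y = g y) (i : Fin 3) (x : E3) :
    pd f i x = pd g i x := by
  rw [show f = g from funext h]

end CurlAux

open CurlAux

/-- for a harmonic homogeneous polynomial `P` of degree `n` and any constant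
`a`, the field `𝒩(x) = a P(x) x + (1 − a/(2n+1) − |x|²) ∇P(x)` satisfies
`∇ × (∇ × 𝒩)(x) = (n+1)(a+2) ∇P(x)`. -/
theorem curl_curl_of_N_field (n : ℕ) (P : MvPolynomial (Fin 3) ℝ)
    (hhom : P.IsHomogeneous n)
    (hharm : ∀ x, lap3 (polyFun P) x = 0) (a : ℝ) :
    ∀ x : E3,
      curl3 (curl3 (fun y => (a * polyFun P y) • y +
          (1 - a / (2 * (n : ℝ) + 1) - ‖y‖ ^ 2) • grad3 (polyFun P) y)) x
        = (((n : ℝ) + 1) * (a + 2)) • grad3 (polyFun P) x := by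
  intro x
  open MvPolynomial in
  set c : ℝ := 1 - a / (2 * (n : ℝ) + 1) with hc
  have hfunpd : ∀ i, pd (polyFun P) i = polyFun (pderiv i P) :=
    fun i => funext fun y => pd_polyFun P i y
  have hlapP : pderiv 0 (pderiv 0 P) + pderiv 1 (pderiv 1 P) + pderiv 2 (pderiv 2 P)
      = (0 : P3) := by
    apply MvPolynomial.funext
    intro v
    have h := hharm (toE3 v)
    simp only [lap3, hfunpd, pd_polyFun, Fin.sum_univ_three] at h
    simpa [map_add, polyFun, toE3_apply] using h
  have heulerP := euler hhom
  set u : E3 → E3 := fun y => (a * polyFun P y) • y +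
      (1 - a / (2 * (n : ℝ) + 1) - ‖y‖ ^ 2) • grad3 (polyFun P) y with hu
  have hNfun : ∀ i : Fin 3, ∀ y : E3, u y i = polyFun (NP a c P i) y := by
    intro i y
    have hnorm : ‖y‖ ^ 2 = y 0 * y 0 + y 1 * y 1 + y 2 * y 2 := by
      rw [EuclideanSpace.norm_eq, Real.sq_sqrt (by positivity)]
      simp [Fin.sum_univ_three, Real.norm_eq_abs, sq_abs, sq]
    rw [hu]
    simp only [PiLp.add_apply, PiLp.smul_apply, smul_eq_mul, grad3, toE3_apply,
      pd_polyFun, NP, polyFun_add, polyFun_mul, polyFun_C, polyFun_X, polyFun_sub,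
      r2, hnorm, ← hc]
  have hcomp : ∀ (w : E3 → E3) (y : E3),
      curl3 w y 0 = pd (fun z => w z 2) 1 y - pd (fun z => w z 1) 2 y ∧
      curl3 w y 1 = pd (fun z => w z 0) 2 y - pd (fun z => w z 2) 0 y ∧
      curl3 w y 2 = pd (fun z => w z 1) 0 y - pd (fun z => w z 0) 1 y := by
    intro w y
    refine ⟨?_, ?_, ?_⟩ <;> simp [curl3, toE3]
  have hM0 : ∀ y : E3, curl3 u y 0
      = polyFun (pderiv 1 (NP a c P 2) - pderiv 2 (NP a c P 1)) y := by
    intro y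
    rw [(hcomp u y).1, pd_congr (hNfun 2), pd_congr (hNfun 1), pd_polyFun, pd_polyFun,
      ← polyFun_sub]
  have hM1 : ∀ y : E3, curl3 u y 1
      = polyFun (pderiv 2 (NP a c P 0) - pderiv 0 (NP a c P 2)) y := by
    intro y
    rw [(hcomp u y).2.1, pd_congr (hNfun 0), pd_congr (hNfun 2), pd_polyFun, pd_polyFun,
      ← polyFun_sub]
  have hM2 : ∀ y : E3, curl3 u y 2
      = polyFun (pderiv 0 (NP a c P 1) - pderiv 1 (NP a c P 0)) y := by
    intro y
    rw [(hcomp u y).2.2, pd_congr (hNfun 1), pd_congr (hNfun 0), pd_polyFun, pd_polyFun,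
      ← polyFun_sub]
  have key0 := key a c n P 0 1 2 (by decide) (by decide) (by decide) (by decide)
    (by decide) (by decide) hlapP heulerP
  have key1 := key a c n P 1 2 0 (by decide) (by decide) (by decide) (by decide)
    (by decide) (by decide) (by linear_combination hlapP) (by linear_combination heulerP)
  have key2 := key a c n P 2 0 1 (by decide) (by decide) (by decide) (by decide)
    (by decide) (by decide) (by linear_combination hlapP) (by linear_combination heulerP)
  have hrhs : ∀ i : Fin 3, ((((n : ℝ) + 1) * (a + 2)) • grad3 (polyFun P) x) i
      = (((n : ℝ) + 1) * (a + 2)) * polyFun (pderiv i P) x := by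
    intro i
    simp [grad3, pd_polyFun]
  refine PiLp.ext fun i => ?_
  fin_cases i
  · show curl3 (curl3 u) x 0 = _
    rw [(hcomp (curl3 u) x).1, pd_congr hM2, pd_congr hM1, pd_polyFun, pd_polyFun,
      ← polyFun_sub, key0, polyFun_mul, polyFun_C]
    exact (hrhs 0).symm
  · show curl3 (curl3 u) x 1 = _
    rw [(hcomp (curl3 u) x).2.1, pd_congr hM0, pd_congr hM2, pd_polyFun, pd_polyFun,
      ← polyFun_sub, key1, polyFun_mul, polyFun_C]
    exact (hrhs 1).symm
  · show curl3 (curl3 u) x 2 = _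
    rw [(hcomp (curl3 u) x).2.2, pd_congr hM1, pd_congr hM0, pd_polyFun, pd_polyFun,
      ← polyFun_sub, key2, polyFun_mul, polyFun_C]
    exact (hrhs 2).symm

end
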